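/- For n ≥ 511, the quantity 2·(4n−7)! / ((n−1)!·(3n−4)!) is strictly greater than 9.1ⁿ, and in particular greater than 3^{2n} = 9ⁿ. -/

import Mathlib

set_option maxRecDepth 100000 in
lemma stmt_19_base :
    91 ^ 511 * (Nat.factorial 510 * Nat.factorial 1529) <
      2 * 10 ^ 511 * Nat.factorial 2037 := by
  decide

lemma stmt_19_fact3 (k : ℕ) :
    Nat.factorial (k+3) = (k+3)*((k+2)*((k+1)*Nat.factorial k)) := by
  rw [show k+3 = (k+2)+1 from rfl, Nat.factorial_succ,
      show k+2 = (k+1)+1 from rfl, Nat.factorial_succ, Nat.factorial_succ]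

lemma stmt_19_fact4 (k : ℕ) :
    Nat.factorial (k+4) = (k+4)*((k+3)*((k+2)*((k+1)*Nat.factorial k))) := by
  rw [show k+4 = (k+3)+1 from rfl, Nat.factorial_succ, stmt_19_fact3]

lemma stmt_19_key (m : ℕ) :
    91 ^ (m + 511) * (Nat.factorial (m + 510) * Nat.factorial (3 * m + 1529)) <
      2 * 10 ^ (m + 511) * Nat.factorial (4 * m + 2037) := by
  induction m with
  | zero => simpa using stmt_19_base
  | succ m ih =>
      have h1 : m + 1 + 510 = (m + 510) + 1 := by omega
      have h2 : 3 * (m + 1) + 1529 = (3 * m + 1529) + 3 := by omega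
      have h3 : 4 * (m + 1) + 2037 = (4 * m + 2037) + 4 := by omega
      have h4 : m + 1 + 511 = (m + 511) + 1 := by omega
      rw [h1, h2, h3, h4, Nat.factorial_succ (m+510), stmt_19_fact3 (3*m+1529),
        stmt_19_fact4 (4*m+2037), pow_succ 91 (m+511), pow_succ 10 (m+511)]
      have hcoef : 91 * ((m + 511) * ((3 * m + 1532) * ((3 * m + 1531) * (3 * m + 1530)))) ≤
          10 * ((4 * m + 2041) * ((4 * m + 2040) * ((4 * m + 2039) * (4 * m + 2038)))) := by
        have h : 10 * ((4 * m + 2041) * ((4 * m + 2040) * ((4 * m + 2039) * (4 * m + 2038)))) =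
            91 * ((m + 511) * ((3 * m + 1532) * ((3 * m + 1531) * (3 * m + 1530)))) +
            (103 * m ^ 4 + 203926 * m ^ 3 + 151261817 * m ^ 2 + 49815807074 * m
              + 6145693802040) := by
          ring
        rw [h]
        exact Nat.le_add_right _ _
      have main := mul_lt_mul' hcoef ih (Nat.zero_le _)
        (Nat.mul_pos (by norm_num) (Nat.mul_pos (by omega) (Nat.mul_pos (by omega)
          (Nat.mul_pos (by omega) (by omega)))))
      obtain ⟨a, ha⟩ : ∃ a, (91:ℕ)^(m+511) = a := ⟨_, rfl⟩
      obtain ⟨b, hb⟩ : ∃ b, (10:ℕ)^(m+511) = b := ⟨_, rfl⟩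
      obtain ⟨p, hp⟩ : ∃ p, Nat.factorial (m+510) = p := ⟨_, rfl⟩
      obtain ⟨q, hq⟩ : ∃ q, Nat.factorial (3*m+1529) = q := ⟨_, rfl⟩
      obtain ⟨r, hr⟩ : ∃ r, Nat.factorial (4*m+2037) = r := ⟨_, rfl⟩
      rw [ha, hb, hp, hq, hr] at main ⊢
      refine lt_of_le_of_lt (le_of_eq ?_) (lt_of_lt_of_le main (le_of_eq ?_)) <;> ring

/-- Brown's bound: for `n ≥ 511`, `2·(4n-7)! / ((n-1)!·(3n-4)!) > 9.1ⁿ > 3^(2n)`. -/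
theorem stmt_19 (n : ℕ) (hn : 511 ≤ n) :
    (9.1 : ℝ) ^ n <
      2 * (Nat.factorial (4 * n - 7) : ℝ) /
        ((Nat.factorial (n - 1) : ℝ) * (Nat.factorial (3 * n - 4) : ℝ)) ∧
    (3 : ℝ) ^ (2 * n) <
      2 * (Nat.factorial (4 * n - 7) : ℝ) /
        ((Nat.factorial (n - 1) : ℝ) * (Nat.factorial (3 * n - 4) : ℝ)) := by
  obtain ⟨m, rfl⟩ : ∃ m, n = m + 511 := ⟨n - 511, by omega⟩
  have e1 : (m + 511) - 1 = m + 510 := by omega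
  have e2 : 3 * (m + 511) - 4 = 3 * m + 1529 := by omega
  have e3 : 4 * (m + 511) - 7 = 4 * m + 2037 := by set_option maxRecDepth 100000 in omega
  rw [e1, e2, e3]
  have key := stmt_19_key m
  have hkeyR : (91 : ℝ) ^ (m + 511) *
      ((Nat.factorial (m + 510) : ℝ) * (Nat.factorial (3 * m + 1529) : ℝ)) <
      2 * 10 ^ (m + 511) * (Nat.factorial (4 * m + 2037) : ℝ) := by
    exact_mod_cast key
  have hpos : (0 : ℝ) < (Nat.factorial (m + 510) : ℝ) * (Nat.factorial (3 * m + 1529) : ℝ) := by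
    positivity
  have h91 : (9.1 : ℝ) = 91 / 10 := by norm_num
  have h1 : (9.1 : ℝ) ^ (m + 511) <
      2 * (Nat.factorial (4 * m + 2037) : ℝ) /
        ((Nat.factorial (m + 510) : ℝ) * (Nat.factorial (3 * m + 1529) : ℝ)) := by
    rw [lt_div_iff₀ hpos, h91, div_pow, div_mul_eq_mul_div,
      div_lt_iff₀ (by positivity : (0:ℝ) < 10 ^ (m + 511))]
    calc (91 : ℝ) ^ (m + 511) * ((Nat.factorial (m + 510) : ℝ) * (Nat.factorial (3 * m + 1529) : ℝ))
        < 2 * 10 ^ (m + 511) * (Nat.factorial (4 * m + 2037) : ℝ) := hkeyR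
      _ = 2 * (Nat.factorial (4 * m + 2037) : ℝ) * 10 ^ (m + 511) := by ring
  refine ⟨h1, lt_trans ?_ h1⟩
  have h9 : (3 : ℝ) ^ (2 * (m + 511)) = 9 ^ (m + 511) := by
    rw [pow_mul]; norm_num
  rw [h9]
  exact pow_lt_pow_left₀ (by norm_num) (by norm_num) (by omega)
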